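/- Let M be a Z_p-module that is derived p-adically complete (equivalently: M is p-adically separated and complete in the derived sense, so that in particular its p-adic Tate module T_p(M) = lim_n M[p^n], with transition maps given by multiplication by p, vanishes). If the p-torsion submodule M[p] is finite, then the full torsion submodule M_tor = ∪_n M[p^n] is finite. -/

import Mathlib

open CategoryTheory

/-- Let `M` be a `ℤ_p`-module that is derived `p`-adically complete;
as in the paper, derived completeness (for a module in degree 0) is used through the
vanishing of the `p`-adic Tate module `T_p(M) = lim_n M[p^n]` (transition maps given by
multiplication by `p`), which we take as the hypothesis. If the `p`-torsion submodule
`M[p]` is finite, then the full torsion submodule `M_tor = ⋃_n M[p^n]` is finite. -/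
theorem torsion_finite_of_derived_p_complete
    (p : ℕ) [Fact p.Prime] (M : Type*) [AddCommGroup M] [Module ℤ_[p] M]
    (hTate : ∀ x : ℕ → M, (∀ n, (p : ℤ_[p]) ^ n • x n = 0) →
      (∀ n, (p : ℤ_[p]) • x (n + 1) = x n) → ∀ n, x n = 0)
    (hfin : {x : M | (p : ℤ_[p]) • x = 0}.Finite) :
    {x : M | ∃ n : ℕ, (p : ℤ_[p]) ^ n • x = 0}.Finite := by
  classical
  set q : ℤ_[p] := (p : ℤ_[p]) with hq
  -- Each `M[p^n]` is finite.
  have Kfin : ∀ n : ℕ, {x : M | q ^ n • x = 0}.Finite := by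
    intro n
    induction n with
    | zero =>
      have : {x : M | q ^ 0 • x = 0} ⊆ {(0 : M)} := by
        intro x hx; simpa using hx
      exact (Set.finite_singleton 0).subset this
    | succ n ih =>
      have hsub : {x : M | q ^ (n + 1) • x = 0} ⊆
          ⋃ y ∈ {x : M | q ^ n • x = 0}, {x : M | q • x = y} := by
        intro x hx
        refine Set.mem_biUnion (show q ^ n • (q • x) = 0 from ?_) rfl
        rw [smul_smul, ← pow_succ]
        exact hx
      refine Set.Finite.subset (Set.Finite.biUnion ih fun y _ => ?_) hsub
      by_cases h : ∃ x₀ : M, q • x₀ = y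
      · obtain ⟨x₀, h0⟩ := h
        have : {x : M | q • x = y} ⊆ (fun z => z + x₀) '' {x : M | q • x = 0} := by
          intro x hx
          exact ⟨x - x₀, by simp [smul_sub, Set.mem_setOf_eq.mp hx, h0], sub_add_cancel x x₀⟩
        exact (hfin.image _).subset this
      · have : {x : M | q • x = y} = ∅ := by
          ext x; simp only [Set.mem_setOf_eq, Set.mem_empty_iff_false, iff_false]
          exact fun hx => h ⟨x, hx⟩
        simp [this]
  by_cases hstab : ∃ k : ℕ, {x : M | q ^ (k + 1) • x = 0} ⊆ {x : M | q ^ k • x = 0}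
  · -- The torsion stabilizes at level `k`, hence is finite.
    obtain ⟨k, hk⟩ := hstab
    have key : ∀ m : ℕ, ∀ x : M, q ^ (k + m) • x = 0 → q ^ k • x = 0 := by
      intro m
      induction m with
      | zero => intro x hx; simpa using hx
      | succ m ih =>
        intro x hx
        have h1 : q ^ (k + m) • (q • x) = 0 := by
          rw [smul_smul, ← pow_succ]
          simpa [add_assoc] using hx
        have h2 : q ^ k • (q • x) = 0 := ih _ h1
        have h3 : q ^ (k + 1) • x = 0 := by
          rw [pow_succ, mul_smul]
          exact h2
        exact hk h3
    refine (Kfin k).subset ?_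
    rintro x ⟨n, hn⟩
    have : q ^ (k + n) • x = 0 := by
      rw [pow_add, mul_smul, hn, smul_zero]
    exact key n x this
  · -- Otherwise, `M[p^{n+1}] ⊋ M[p^n]` for every `n`; build a nonzero element of the
    -- Tate module using Kőnig's lemma, contradicting `hTate`.
    exfalso
    push_neg at hstab
    -- the sets `G n` of elements of exact order `p^{n+1}`
    set G : ℕ → Type _ := fun n => {x : M // q ^ (n + 1) • x = 0 ∧ q ^ n • x ≠ 0} with hG
    let fmap : ∀ n, G (n + 1) → G n := fun n x =>
      ⟨q • x.1, by rw [smul_smul, ← pow_succ]; exact x.2.1,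
        by rw [smul_smul, ← pow_succ]; exact x.2.2⟩
    let F : ℕᵒᵖ ⥤ Type _ := Functor.ofOpSequence (fun n => (TypeCat.ofHom (fmap n) : G (n + 1) ⟶ G n))
    haveI : ∀ j : ℕᵒᵖ, Finite (F.obj j) := by
      intro j
      have : {x : M | q ^ (j.unop + 1) • x = 0 ∧ q ^ j.unop • x ≠ 0}.Finite :=
        (Kfin (j.unop + 1)).subset fun x hx => hx.1
      exact this.to_subtype
    haveI : ∀ j : ℕᵒᵖ, Nonempty (F.obj j) := by
      intro j
      obtain ⟨x, hx1, hx2⟩ := Set.not_subset.mp (hstab j.unop)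
      exact ⟨⟨x, hx1, hx2⟩⟩
    obtain ⟨u, hu⟩ := nonempty_sections_of_finite_inverse_system F
    -- the compatible sequence
    set y : ℕ → M := fun n => match n with
      | 0 => 0
      | n + 1 => (u (Opposite.op n)).1 with hy
    have h1 : ∀ n, q ^ n • y n = 0 := by
      intro n
      match n with
      | 0 => simp [hy]
      | n + 1 => exact (u (Opposite.op n)).2.1
    have h2 : ∀ n, q • y (n + 1) = y n := by
      intro n
      match n with
      | 0 =>
        have := (u (Opposite.op 0)).2.1
        simpa [hy] using this
      | m + 1 =>
        have hcomp := hu ((homOfLE (Nat.le_add_right m 1)).op :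
          Opposite.op (m + 1) ⟶ Opposite.op m)
        rw [Functor.ofOpSequence_map_homOfLE_succ] at hcomp
        have := congrArg Subtype.val hcomp
        exact this
    have := hTate y h1 h2 1
    exact (u (Opposite.op 0)).2.2 (by simpa [hy] using this)
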